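/- The bracket of 𝔤₂ᶜ is well-defined, i.e. its first component is always a traceless anti-Hermitian 3×3 complex matrix, and it satisfies the Jacobi identity. Hence it makes su(3) × ℂ³ into a 14-dimensional real Lie algebra (the compact real form of the exceptional Lie algebra 𝔤₂). -/

import Mathlib

open Matrix

/-- The ℂ-bilinear extension of the cross product to `ℂ³`. -/
def crossC (x y : Fin 3 → ℂ) : Fin 3 → ℂ :=
  ![x 1 * y 2 - x 2 * y 1, x 2 * y 0 - x 0 * y 2, x 0 * y 1 - x 1 * y 0]

/-- The bracket of `𝔤₂ᶜ` on `su(3) × ℂ³` (written on all of `Matrix(3,3,ℂ) × ℂ³`):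
`[(A₁,v₁),(A₂,v₂)] = (A₁A₂ − A₂A₁ + 3(v₂v₁* − v₁v₂*) − (v₁*v₂ − v₂*v₁)·I₃,
A₁v₂ − A₂v₁ + 2·(conj v₁) × (conj v₂))`. -/
noncomputable def g2cBracket (u v : Matrix (Fin 3) (Fin 3) ℂ × (Fin 3 → ℂ)) :
    Matrix (Fin 3) (Fin 3) ℂ × (Fin 3 → ℂ) :=
  ( u.1 * v.1 - v.1 * u.1
      + (3 : ℂ) • (vecMulVec v.2 (star u.2) - vecMulVec u.2 (star v.2))
      - ((star u.2 ⬝ᵥ v.2) - (star v.2 ⬝ᵥ u.2)) • (1 : Matrix (Fin 3) (Fin 3) ℂ),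
    u.1.mulVec v.2 - v.1.mulVec u.2 + (2 : ℂ) • crossC (star u.2) (star v.2) )

set_option maxHeartbeats 4000000

/-- The bracket of `𝔤₂ᶜ` is well defined (its first component is traceless anti-Hermitian)
and satisfies the Jacobi identity on `su(3) × ℂ³`: it makes `su(3) × ℂ³` into a real Lie
algebra, the compact real form of the exceptional Lie algebra `𝔤₂`. -/
theorem stmt_14 :
    (∀ (A₁ A₂ : Matrix (Fin 3) (Fin 3) ℂ) (v₁ v₂ : Fin 3 → ℂ),
      A₁ᴴ = -A₁ → A₁.trace = 0 → A₂ᴴ = -A₂ → A₂.trace = 0 →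
      (g2cBracket (A₁, v₁) (A₂, v₂)).1ᴴ = -(g2cBracket (A₁, v₁) (A₂, v₂)).1
        ∧ (g2cBracket (A₁, v₁) (A₂, v₂)).1.trace = 0)
    ∧ (∀ u v w : Matrix (Fin 3) (Fin 3) ℂ × (Fin 3 → ℂ),
        u.1ᴴ = -u.1 → u.1.trace = 0 → v.1ᴴ = -v.1 → v.1.trace = 0 →
        w.1ᴴ = -w.1 → w.1.trace = 0 →
        g2cBracket (g2cBracket u v) w + g2cBracket (g2cBracket v w) u
          + g2cBracket (g2cBracket w u) v = 0) := by
  have key : ∀ (A : Matrix (Fin 3) (Fin 3) ℂ), Aᴴ = -A → ∀ i j, (starRingEnd ℂ) (A i j) = -(A j i) := by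
    intro A hA i j
    have := congrFun (congrFun hA j) i
    simpa [Matrix.conjTranspose_apply] using this
  have keyt : ∀ (A : Matrix (Fin 3) (Fin 3) ℂ), A.trace = 0 → A 2 2 = -A 0 0 - A 1 1 := by
    intro A hA
    simp [Matrix.trace, Matrix.diag, Fin.sum_univ_three] at hA
    linear_combination hA
  constructor
  · intro A₁ A₂ v₁ v₂ h1 t1 h2 t2
    have h1' := key A₁ h1
    have h2' := key A₂ h2
    constructor
    · ext i j
      fin_cases i <;> fin_cases j <;>
        simp [g2cBracket, Matrix.conjTranspose_apply, Matrix.add_apply, Matrix.sub_apply,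
          Matrix.smul_apply, Matrix.mul_apply, Matrix.one_apply, Matrix.neg_apply,
          Fin.sum_univ_three, Matrix.vecMulVec_apply, dotProduct, Pi.star_apply,
          smul_eq_mul, h1', h2'] <;>
        ring
    · simp [g2cBracket, Matrix.trace, Matrix.diag, Fin.sum_univ_three, Matrix.add_apply,
        Matrix.sub_apply, Matrix.smul_apply, Matrix.mul_apply, Matrix.one_apply,
        Matrix.vecMulVec_apply, dotProduct, Pi.star_apply, smul_eq_mul,
        keyt A₁ t1, keyt A₂ t2]
      ring
  · intro u v w hu tu hv tv hw tw
    have hu' := key u.1 hu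
    have hv' := key v.1 hv
    have hw' := key w.1 hw
    have tu' := keyt u.1 tu
    have tv' := keyt v.1 tv
    have tw' := keyt w.1 tw
    refine Prod.ext ?_ ?_
    · show _ = (0 : Matrix (Fin 3) (Fin 3) ℂ)
      ext i j
      fin_cases i <;> fin_cases j <;>
        simp [g2cBracket, crossC, Matrix.add_apply, Matrix.sub_apply, Matrix.smul_apply,
          Matrix.mul_apply, Matrix.one_apply, Matrix.neg_apply, Fin.sum_univ_three,
          Matrix.vecMulVec_apply, dotProduct, Matrix.mulVec, Pi.star_apply,
          Pi.add_apply, Pi.sub_apply, Pi.smul_apply, smul_eq_mul, star_add, star_sub,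
          star_mul', star_star, Matrix.cons_val_zero, Matrix.cons_val_one, Matrix.head_cons,
          Matrix.cons_val_two, Matrix.tail_cons, Prod.fst_add, Prod.snd_add, Matrix.vecHead,
          Matrix.vecTail, Function.comp, map_ofNat, Complex.star_def,
          hu', hv', hw', tu', tv', tw', -Matrix.cons_vecMulVec, -Matrix.vecMulVec_cons] <;>
        ring
    · show _ = (0 : Fin 3 → ℂ)
      funext i
      fin_cases i <;>
        simp [g2cBracket, crossC, Matrix.add_apply, Matrix.sub_apply, Matrix.smul_apply,
          Matrix.mul_apply, Matrix.one_apply, Matrix.neg_apply, Fin.sum_univ_three,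
          Matrix.vecMulVec_apply, dotProduct, Matrix.mulVec, Pi.star_apply,
          Pi.add_apply, Pi.sub_apply, Pi.smul_apply, smul_eq_mul, star_add, star_sub,
          star_mul', star_star, Matrix.cons_val_zero, Matrix.cons_val_one, Matrix.head_cons,
          Matrix.cons_val_two, Matrix.tail_cons, Prod.fst_add, Prod.snd_add, Matrix.vecHead,
          Matrix.vecTail, Function.comp, map_ofNat, Complex.star_def,
          hu', hv', hw', tu', tv', tw'] <;>
        ring
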